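/- Let C be a finite set of points on the unit sphere S^{n−1} with pairwise inner products at most cos θ for distinct points (a spherical θ-code), where 0 < θ < π/2. Then Σ_{(u,v): ⟨u,v⟩ < −√(cos θ)} ⟨u,v⟩² ≤ cos θ · #{(u,v) : ⟨u,v⟩ < −√(cos θ)} + |C|·(1 − cos θ), where sums and counts are over ordered pairs of distinct points of C. -/

import Mathlib

open Finset in
lemma pfender_key {E : Type*} [NormedAddCommGroup E] [InnerProductSpace ℝ E]
    {c : ℝ} (hc0 : 0 ≤ c) (hc1 : c ≤ 1) (u : E) (hu : ‖u‖ = 1)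
    (F : Finset E) (hF1 : ∀ v ∈ F, ‖v‖ = 1)
    (hFneg : ∀ v ∈ F, (inner ℝ u v : ℝ) ≤ 0)
    (hFc : ∀ v ∈ F, ∀ w ∈ F, v ≠ w → (inner ℝ v w : ℝ) ≤ c) :
    ∑ v ∈ F, (inner ℝ u v : ℝ) ^ 2 ≤ c * F.card + (1 - c) := by
  classical
  set t : E → ℝ := fun v => (inner ℝ u v : ℝ) with ht
  set T : ℝ := ∑ v ∈ F, t v ^ 2 with hT
  have hT0 : 0 ≤ T := Finset.sum_nonneg fun v _ => sq_nonneg _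
  set w : E := ∑ v ∈ F, t v • v with hw
  have huw : (inner ℝ u w : ℝ) = T := by
    simp only [hw, inner_sum, real_inner_smul_right, hT, sq]
    rfl
  have hww : (inner ℝ w w : ℝ) = ∑ v ∈ F, ∑ v' ∈ F, t v * t v' * (inner ℝ v v' : ℝ) := by
    simp only [hw, sum_inner, inner_sum, real_inner_smul_left, real_inner_smul_right]
    refine Finset.sum_congr rfl fun v _ => Finset.sum_congr rfl fun v' _ => ?_
    rw [real_inner_comm v' v]; ring
  have hU : (∑ v ∈ F, t v) ^ 2 ≤ F.card * T := sq_sum_le_card_mul_sum_sq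
  have hbound : (inner ℝ w w : ℝ) ≤ c * (∑ v ∈ F, t v) ^ 2 + (1 - c) * T := by
    rw [hww]
    have hstep : ∑ v ∈ F, ∑ v' ∈ F, t v * t v' * (inner ℝ v v' : ℝ)
        ≤ ∑ v ∈ F, ∑ v' ∈ F, (c * (t v * t v') + (if v' = v then (1 - c) * t v ^ 2 else 0)) := by
      refine Finset.sum_le_sum fun v hv => Finset.sum_le_sum fun v' hv' => ?_
      by_cases h : v' = v
      · subst h
        have h1 : (inner ℝ v' v' : ℝ) = 1 := by
          rw [real_inner_self_eq_norm_sq, hF1 v' hv']; norm_num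
        rw [h1, if_pos rfl]; nlinarith [sq_nonneg (t v')]
      · simp only [h, if_false, add_zero]
        have h1 : (inner ℝ v v' : ℝ) ≤ c := hFc v hv v' hv' (Ne.symm h)
        have h2 : 0 ≤ t v * t v' := by nlinarith [hFneg v hv, hFneg v' hv']
        nlinarith
    refine hstep.trans (le_of_eq ?_)
    have e1 : ∑ v ∈ F, ∑ v' ∈ F, (if v' = v then (1 - c) * t v ^ 2 else 0) = (1 - c) * T := by
      rw [hT, Finset.mul_sum]
      exact Finset.sum_congr rfl fun v hv => by rw [Finset.sum_ite_eq' F v, if_pos hv]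
    have e2 : ∑ v ∈ F, ∑ v' ∈ F, c * (t v * t v') = c * (∑ v ∈ F, t v) ^ 2 := by
      rw [sq, Finset.sum_mul_sum, Finset.mul_sum]
      refine Finset.sum_congr rfl fun v _ => ?_
      rw [Finset.mul_sum]
    simp only [Finset.sum_add_distrib]
    rw [e1, e2]
  have hCS : T * T ≤ (inner ℝ w w : ℝ) := by
    have h1 := real_inner_mul_inner_self_le u w
    have huu : (inner ℝ u u : ℝ) = 1 := by
      rw [real_inner_self_eq_norm_sq, hu]; norm_num
    rwa [huw, huu, one_mul] at h1
  have hfinal : T * T ≤ (c * F.card + (1 - c)) * T := by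
    calc T * T ≤ c * (∑ v ∈ F, t v) ^ 2 + (1 - c) * T := hCS.trans hbound
    _ ≤ c * (F.card * T) + (1 - c) * T := by
        have := mul_le_mul_of_nonneg_left hU hc0
        linarith
    _ = (c * F.card + (1 - c)) * T := by ring
  rcases eq_or_lt_of_le hT0 with h0 | h0
  · rw [← h0]
    have : (0 : ℝ) ≤ c * F.card := mul_nonneg hc0 (Nat.cast_nonneg _)
    linarith
  · exact le_of_mul_le_mul_right hfinal h0

open scoped Classical in
theorem pfender_inequality (n : ℕ) (θ : ℝ) (hθ : 0 < θ ∧ θ < Real.pi / 2)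
    (C : Finset (EuclideanSpace ℝ (Fin n)))
    (hunit : ∀ x ∈ C, ‖x‖ = 1)
    (hcode : ∀ u ∈ C, ∀ v ∈ C, u ≠ v → (inner ℝ u v : ℝ) ≤ Real.cos θ) :
    (∑ u ∈ C, ∑ v ∈ C.erase u,
        if (inner ℝ u v : ℝ) < -Real.sqrt (Real.cos θ) then (inner ℝ u v : ℝ) ^ 2 else 0) ≤
      Real.cos θ *
          (∑ u ∈ C, ∑ v ∈ C.erase u,
            if (inner ℝ u v : ℝ) < -Real.sqrt (Real.cos θ) then (1 : ℝ) else 0) +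
        (C.card : ℝ) * (1 - Real.cos θ) := by
  set c : ℝ := Real.cos θ with hc
  have hc0 : 0 ≤ c := Real.cos_nonneg_of_mem_Icc
    ⟨by linarith [hθ.1, Real.pi_pos], le_of_lt hθ.2⟩
  have hc1 : c ≤ 1 := Real.cos_le_one θ
  have key : ∀ u ∈ C,
      (∑ v ∈ C.erase u, if (inner ℝ u v : ℝ) < -Real.sqrt c then (inner ℝ u v : ℝ) ^ 2 else 0)
        ≤ c * (∑ v ∈ C.erase u, if (inner ℝ u v : ℝ) < -Real.sqrt c then (1 : ℝ) else 0)
          + (1 - c) := by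
    intro u hu
    set F := (C.erase u).filter (fun v => (inner ℝ u v : ℝ) < -Real.sqrt c) with hF
    have h1 : (∑ v ∈ C.erase u, if (inner ℝ u v : ℝ) < -Real.sqrt c then (inner ℝ u v : ℝ) ^ 2 else 0)
        = ∑ v ∈ F, (inner ℝ u v : ℝ) ^ 2 := (Finset.sum_filter _ _).symm
    have h2 : (∑ v ∈ C.erase u, if (inner ℝ u v : ℝ) < -Real.sqrt c then (1 : ℝ) else 0)
        = (F.card : ℝ) := by
      rw [hF, ← Finset.sum_filter, Finset.sum_const, nsmul_eq_mul, mul_one]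
    rw [h1, h2]
    refine pfender_key hc0 hc1 u (hunit u hu) F ?_ ?_ ?_
    · intro v hv
      exact hunit v (Finset.mem_of_mem_erase (Finset.mem_of_mem_filter v hv))
    · intro v hv
      have := (Finset.mem_filter.1 hv).2
      have h3 : (0 : ℝ) ≤ Real.sqrt c := Real.sqrt_nonneg c
      linarith
    · intro v hv v' hv' hne
      exact hcode v (Finset.mem_of_mem_erase (Finset.mem_of_mem_filter v hv))
        v' (Finset.mem_of_mem_erase (Finset.mem_of_mem_filter v' hv')) hne
  calc (∑ u ∈ C, ∑ v ∈ C.erase u,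
        if (inner ℝ u v : ℝ) < -Real.sqrt c then (inner ℝ u v : ℝ) ^ 2 else 0)
      ≤ ∑ u ∈ C, (c * (∑ v ∈ C.erase u,
          if (inner ℝ u v : ℝ) < -Real.sqrt c then (1 : ℝ) else 0) + (1 - c)) :=
        Finset.sum_le_sum key
    _ = c * (∑ u ∈ C, ∑ v ∈ C.erase u,
          if (inner ℝ u v : ℝ) < -Real.sqrt c then (1 : ℝ) else 0) + (C.card : ℝ) * (1 - c) := by
        rw [Finset.sum_add_distrib, Finset.mul_sum, Finset.sum_const, nsmul_eq_mul]
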